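/- For every fair-goods instance with exactly 2 agents, there exists a connected allocation A = (A_1, A_2) that is simultaneously MMS (v_i(A_i) >= MMS_i for i = 1, 2) and PROP1, and that moreover satisfies EW(A) = OPT_E, UW(A) >= 1, and UW(A) >= (2/3) * OPT_U. In particular, for two agents the price of MMS and of PROP1 with respect to egalitarian welfare is 1, and with respect to utilitarian welfare is at most 3/2. -/

import Mathlib

open Finset

noncomputable section

/-- The value of a bundle `S` of items under additive (item-level) valuation `v`. -/
def bundleVal {m : ℕ} (v : Fin m → ℝ) (S : Finset (Fin m)) : ℝ := ∑ e ∈ S, v e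

/-- A bundle is connected if it is an interval of the line `e_1, …, e_m`. -/
def IsConnBundle {m : ℕ} (S : Finset (Fin m)) : Prop :=
  ∀ a ∈ S, ∀ c ∈ S, ∀ b : Fin m, a ≤ b → b ≤ c → b ∈ S

/-- A connected allocation: pairwise disjoint connected bundles covering all items. -/
def ConnAlloc (n m : ℕ) (A : Fin n → Finset (Fin m)) : Prop :=
  (∀ i, IsConnBundle (A i)) ∧
  (∀ i j : Fin n, i ≠ j → Disjoint (A i) (A j)) ∧
  (∀ e : Fin m, ∃ i, e ∈ A i)

/-- The maximin share of an agent with valuation `v`: the maximum over connected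
`n`-partitions of the minimum bundle value. -/
def mmsVal (n m : ℕ) (v : Fin m → ℝ) : ℝ :=
  sSup { x : ℝ | ∃ A : Fin n → Finset (Fin m), ConnAlloc n m A ∧ x = ⨅ j, bundleVal v (A j) }

/-- Utilitarian welfare of an allocation. -/
def utilW (n m : ℕ) (v : Fin n → Fin m → ℝ) (A : Fin n → Finset (Fin m)) : ℝ :=
  ∑ i, bundleVal (v i) (A i)

/-- Egalitarian welfare of an allocation. -/
def egalW (n m : ℕ) (v : Fin n → Fin m → ℝ) (A : Fin n → Finset (Fin m)) : ℝ :=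
  ⨅ i, bundleVal (v i) (A i)

/-- Optimal utilitarian welfare over all connected allocations. -/
def optU (n m : ℕ) (v : Fin n → Fin m → ℝ) : ℝ :=
  sSup { x : ℝ | ∃ A, ConnAlloc n m A ∧ x = utilW n m v A }

/-- Optimal egalitarian welfare over all connected allocations. -/
def optE (n m : ℕ) (v : Fin n → Fin m → ℝ) : ℝ :=
  sSup { x : ℝ | ∃ A, ConnAlloc n m A ∧ x = egalW n m v A }

/-- A connected allocation of goods is PROP1 if every agent either already has value at
least `1/n`, or gets value at least `1/n` after adding one item keeping connectivity. -/
def Prop1Goods (n m : ℕ) (v : Fin n → Fin m → ℝ) (A : Fin n → Finset (Fin m)) : Prop :=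
  ∀ i, (1 / (n : ℝ)) ≤ bundleVal (v i) (A i) ∨
    ∃ e : Fin m, e ∉ A i ∧ IsConnBundle (insert e (A i)) ∧
      (1 / (n : ℝ)) ≤ bundleVal (v i) (insert e (A i))

-- prefix and suffix bundles
def preB (m k : ℕ) : Finset (Fin m) := univ.filter (fun e => (e : ℕ) < k)
def sufB (m k : ℕ) : Finset (Fin m) := univ.filter (fun e => ¬ (e : ℕ) < k)

lemma mem_preB {m k : ℕ} {e : Fin m} : e ∈ preB m k ↔ (e : ℕ) < k := by simp [preB]
lemma mem_sufB {m k : ℕ} {e : Fin m} : e ∈ sufB m k ↔ k ≤ (e : ℕ) := by simp [sufB]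

lemma conn_preB {m k : ℕ} : IsConnBundle (preB m k) := by
  intro a ha c hc b hab hbc
  rw [mem_preB] at *
  have h1 : (b : ℕ) ≤ (c : ℕ) := hbc
  omega

lemma conn_sufB {m k : ℕ} : IsConnBundle (sufB m k) := by
  intro a ha c hc b hab hbc
  rw [mem_sufB] at *
  have h1 : (a : ℕ) ≤ (b : ℕ) := hab
  omega

lemma disj_preB_sufB {m k : ℕ} : Disjoint (preB m k) (sufB m k) := by
  rw [Finset.disjoint_left]
  intro e he hs
  rw [mem_preB] at he; rw [mem_sufB] at hs; omega

lemma connAlloc_pair {m k : ℕ} : ConnAlloc 2 m ![preB m k, sufB m k] := by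
  refine ⟨?_, ?_, ?_⟩
  · intro i; fin_cases i
    · simpa using conn_preB (m := m) (k := k)
    · simpa using conn_sufB (m := m) (k := k)
  · intro i j hij; fin_cases i <;> fin_cases j <;> simp at hij ⊢
    · exact disj_preB_sufB
    · exact disj_preB_sufB.symm
  · intro e
    by_cases h : (e : ℕ) < k
    · exact ⟨0, by simpa [mem_preB] using h⟩
    · exact ⟨1, by simp [mem_sufB]; omega⟩

lemma connAlloc_pair' {m k : ℕ} : ConnAlloc 2 m ![sufB m k, preB m k] := by
  refine ⟨?_, ?_, ?_⟩
  · intro i; fin_cases i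
    · simpa using conn_sufB (m := m) (k := k)
    · simpa using conn_preB (m := m) (k := k)
  · intro i j hij; fin_cases i <;> fin_cases j <;> simp at hij ⊢
    · exact disj_preB_sufB.symm
    · exact disj_preB_sufB
  · intro e
    by_cases h : (e : ℕ) < k
    · exact ⟨1, by simpa [mem_preB] using h⟩
    · exact ⟨0, by simp [mem_sufB]; omega⟩

lemma bundleVal_pre_add_suf {m k : ℕ} (v : Fin m → ℝ) :
    bundleVal v (preB m k) + bundleVal v (sufB m k) = bundleVal v univ := by
  simpa [bundleVal, preB, sufB] using
    Finset.sum_filter_add_sum_filter_not univ (fun e : Fin m => (e : ℕ) < k) v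

lemma bundleVal_mono_pre {m : ℕ} {k l : ℕ} (v : Fin m → ℝ) (hv : ∀ j, 0 ≤ v j)
    (h : k ≤ l) : bundleVal v (preB m k) ≤ bundleVal v (preB m l) := by
  apply Finset.sum_le_sum_of_subset_of_nonneg
  · intro e he; rw [mem_preB] at *; omega
  · intro e _ _; exact hv e

lemma bundleVal_nonneg {m : ℕ} (v : Fin m → ℝ) (hv : ∀ j, 0 ≤ v j) (S : Finset (Fin m)) :
    0 ≤ bundleVal v S := Finset.sum_nonneg fun e _ => hv e

lemma bundleVal_le_total {m : ℕ} (v : Fin m → ℝ) (hv : ∀ j, 0 ≤ v j) (S : Finset (Fin m)) :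
    bundleVal v S ≤ bundleVal v univ := by
  apply Finset.sum_le_sum_of_subset_of_nonneg (Finset.subset_univ S)
  intro e _ _; exact hv e

lemma iInf_fin2 (f : Fin 2 → ℝ) : (⨅ i, f i) = min (f 0) (f 1) := by
  apply le_antisymm
  · exact le_min (ciInf_le (Set.finite_range f).bddBelow 0) (ciInf_le (Set.finite_range f).bddBelow 1)
  · apply le_ciInf
    intro i; fin_cases i
    · exact min_le_left _ _
    · exact min_le_right _ _

lemma egalW_pair {m : ℕ} (v : Fin 2 → Fin m → ℝ) (S T : Finset (Fin m)) :
    egalW 2 m v ![S, T] = min (bundleVal (v 0) S) (bundleVal (v 1) T) := by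
  rw [egalW, iInf_fin2]; simp

lemma utilW_pair {m : ℕ} (v : Fin 2 → Fin m → ℝ) (S T : Finset (Fin m)) :
    utilW 2 m v ![S, T] = bundleVal (v 0) S + bundleVal (v 1) T := by
  rw [utilW, Fin.sum_univ_two]; simp

lemma egalW_le {n m : ℕ} (v : Fin n → Fin m → ℝ) (A : Fin n → Finset (Fin m)) (i : Fin n) :
    egalW n m v A ≤ bundleVal (v i) (A i) :=
  ciInf_le (Set.finite_range _).bddBelow i

lemma insert_preB {m c : ℕ} (hc : c < m) :
    insert (⟨c, hc⟩ : Fin m) (preB m c) = preB m (c + 1) := by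
  ext e
  simp only [Finset.mem_insert, mem_preB]
  constructor
  · rintro (rfl | h)
    · exact Nat.lt_succ_self c
    · omega
  · intro h
    rcases Nat.lt_or_ge (e : ℕ) c with h' | h'
    · exact Or.inr h'
    · left; apply Fin.ext; simp; omega

lemma insert_sufB {m c : ℕ} (hc : c < m) :
    insert (⟨c, hc⟩ : Fin m) (sufB m (c + 1)) = sufB m c := by
  ext e
  simp only [Finset.mem_insert, mem_sufB]
  constructor
  · rintro (rfl | h)
    · exact Nat.le_refl c
    · omega
  · intro h
    rcases Nat.lt_or_ge (e : ℕ) (c+1) with h' | h'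
    · left; apply Fin.ext; simp; omega
    · exact Or.inr h'

lemma fin2cases (i : Fin 2) : i = 0 ∨ i = 1 := by
  rcases i with ⟨_ | _ | n, h⟩
  · exact Or.inl rfl
  · exact Or.inr rfl
  · omega

lemma downclosed_eq_preB {m : ℕ} (S : Finset (Fin m))
    (h : ∀ x ∈ S, ∀ y : Fin m, y ≤ x → y ∈ S) : S = preB m S.card := by
  ext e
  rw [mem_preB]
  constructor
  · intro he
    have hsub : Finset.Iic e ⊆ S := fun y hy => h e he y (Finset.mem_Iic.mp hy)
    have := Finset.card_le_card hsub
    rw [Fin.card_Iic] at this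
    omega
  · intro hlt
    by_contra he
    have hsub : S ⊆ Finset.Iio e := by
      intro x hx
      rw [Finset.mem_Iio]
      by_contra hxe
      exact he (h x hx e (le_of_not_gt hxe))
    have := Finset.card_le_card hsub
    rw [Fin.card_Iio] at this
    omega

lemma classify {m : ℕ} (A : Fin 2 → Finset (Fin m)) (h : ConnAlloc 2 m A) :
    ∃ k, k ≤ m ∧ ((A 0 = preB m k ∧ A 1 = sufB m k) ∨ (A 0 = sufB m k ∧ A 1 = preB m k)) := by
  obtain ⟨hconn, hdisj, hcov⟩ := h
  have hcompl : ∀ e : Fin m, e ∈ A 1 ↔ e ∉ A 0 := by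
    intro e
    constructor
    · intro h1 h0
      exact (Finset.disjoint_left.mp (hdisj 0 1 (by decide)) h0) h1
    · intro h0
      obtain ⟨i, hi⟩ := hcov e
      fin_cases i
      · exact absurd hi h0
      · exact hi
  have hdich : (∀ x ∈ A 0, ∀ y : Fin m, y ≤ x → y ∈ A 0) ∨
      (∀ x ∈ A 1, ∀ y : Fin m, y ≤ x → y ∈ A 1) := by
    by_contra hns
    push_neg at hns
    obtain ⟨⟨x0, hx0, y0, hy0le, hy0⟩, ⟨x1, hx1, y1, hy1le, hy1⟩⟩ := hns
    have hy0' : y0 ∈ A 1 := (hcompl y0).mpr hy0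
    have hy1' : y1 ∈ A 0 := by
      by_contra hc
      exact hy1 ((hcompl y1).mpr hc)
    rcases le_total y0 y1 with hle | hle
    · exact hy1 (hconn 1 y0 hy0' x1 hx1 y1 hle hy1le)
    · exact hy0 (hconn 0 y1 hy1' x0 hx0 y0 hle hy0le)
  have hcard : ∀ S : Finset (Fin m), S.card ≤ m := by
    intro S
    have := Finset.card_le_univ S
    simpa using this
  rcases hdich with hd | hd
  · have h0 := downclosed_eq_preB _ hd
    have hmem : ∀ e : Fin m, e ∈ A 0 ↔ (e : ℕ) < (A 0).card := by
      intro e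
      have := mem_preB (m := m) (k := (A 0).card) (e := e)
      rw [← h0] at this
      exact this
    refine ⟨(A 0).card, hcard _, Or.inl ⟨h0, ?_⟩⟩
    ext e
    rw [mem_sufB, hcompl e, hmem e]
    omega
  · have h1 := downclosed_eq_preB _ hd
    have hmem : ∀ e : Fin m, e ∈ A 1 ↔ (e : ℕ) < (A 1).card := by
      intro e
      have := mem_preB (m := m) (k := (A 1).card) (e := e)
      rw [← h1] at this
      exact this
    refine ⟨(A 1).card, hcard _, Or.inr ⟨?_, h1⟩⟩
    ext e
    rw [mem_sufB]
    constructor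
    · intro h0
      have : e ∉ A 1 := fun hc => (hcompl e).mp hc h0
      rw [hmem e] at this
      omega
    · intro hk
      by_contra h0
      have := (hcompl e).mpr h0
      rw [hmem e] at this
      omega


lemma optE_bddAbove {m : ℕ} (v : Fin 2 → Fin m → ℝ) (hpos : ∀ i j, 0 ≤ v i j)
    (hnorm : ∀ i, bundleVal (v i) Finset.univ = 1) :
    BddAbove { x : ℝ | ∃ A, ConnAlloc 2 m A ∧ x = egalW 2 m v A } := by
  refine ⟨1, ?_⟩
  rintro x ⟨A, hA, rfl⟩
  exact le_trans (egalW_le v A 0) (by rw [← hnorm 0]; exact bundleVal_le_total _ (hpos 0) _)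

lemma optE_nonempty {m : ℕ} (v : Fin 2 → Fin m → ℝ) :
    Set.Nonempty { x : ℝ | ∃ A, ConnAlloc 2 m A ∧ x = egalW 2 m v A } :=
  ⟨egalW 2 m v ![preB m 0, sufB m 0], ![preB m 0, sufB m 0], connAlloc_pair, rfl⟩

lemma exists_good (m : ℕ) (v : Fin 2 → Fin m → ℝ)
    (hpos : ∀ i j, 0 ≤ v i j)
    (hnorm : ∀ i, bundleVal (v i) Finset.univ = 1) :
    ∃ A : Fin 2 → Finset (Fin m), ConnAlloc 2 m A ∧
      egalW 2 m v A = optE 2 m v ∧ Prop1Goods 2 m v A ∧ (1 : ℝ) ≤ utilW 2 m v A := by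
  classical
  -- m is positive
  have hm : 0 < m := by
    rcases Nat.eq_zero_or_pos m with rfl | hm
    · have := hnorm 0
      simp [bundleVal] at this
    · exact hm
  set g : Fin 2 → ℕ → ℝ := fun i k => bundleVal (v i) (preB m k) with hg
  have hsuf : ∀ (i : Fin 2) (k : ℕ), bundleVal (v i) (sufB m k) = 1 - g i k := by
    intro i k
    have := bundleVal_pre_add_suf (m := m) (k := k) (v i)
    rw [hnorm i] at this
    simp only [hg]
    linarith
  have hmono : ∀ (i : Fin 2) {k l : ℕ}, k ≤ l → g i k ≤ g i l := by
    intro i k l hkl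
    exact bundleVal_mono_pre (v i) (hpos i) hkl
  set P : ℕ → Prop := fun k => g 0 k + g 1 k ≤ 1 with hPdef
  have hP0 : P 0 := by
    have h0 : ∀ i : Fin 2, g i 0 = 0 := by
      intro i; simp [hg, bundleVal, preB]
    simp [hPdef, h0]
  set c : ℕ := Nat.findGreatest P m with hc
  have hPc : P c := Nat.findGreatest_spec (Nat.zero_le m) hP0
  have hcm : c ≤ m := Nat.findGreatest_le m
  have hgm : ∀ i : Fin 2, g i m = 1 := by
    intro i
    have huniv : preB m m = Finset.univ := by
      ext e; simp [mem_preB, e.isLt]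
    simp only [hg, huniv]
    exact hnorm i
  have hcmlt : c < m := by
    rcases Nat.lt_or_ge c m with h | h
    · exact h
    · exfalso
      have hceq : c = m := le_antisymm hcm h
      rw [hceq, hPdef] at hPc
      simp only [hgm] at hPc
      linarith
  have hnotP : ¬ P (c + 1) := Nat.findGreatest_is_greatest (Nat.lt_succ_self c) hcmlt
  have ha : g 0 c + g 1 c ≤ 1 := hPc
  have hb : 1 < g 0 (c+1) + g 1 (c+1) :=
    lt_of_not_ge fun hle => hnotP hle
  set t : ℝ := max (max (g 0 c) (g 1 c)) (max (1 - g 0 (c+1)) (1 - g 1 (c+1))) with ht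
  have hta0 : g 0 c ≤ t := le_trans (le_max_left _ _) (le_max_left _ _)
  have hta1 : g 1 c ≤ t := le_trans (le_max_right _ _) (le_max_left _ _)
  have htb0 : 1 - g 0 (c+1) ≤ t := le_trans (le_max_left _ _) (le_max_right _ _)
  have htb1 : 1 - g 1 (c+1) ≤ t := le_trans (le_max_right _ _) (le_max_right _ _)
  -- optE is at most t
  have hoptle : optE 2 m v ≤ t := by
    apply csSup_le (optE_nonempty v)
    rintro x ⟨X, hX, rfl⟩
    obtain ⟨k, hk, hor⟩ := classify X hX
    have hdich : k ≤ c ∨ c + 1 ≤ k := by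
      by_cases hPk : P k
      · exact Or.inl (Nat.le_findGreatest hk hPk)
      · refine Or.inr ?_
        by_contra hlt
        push_neg at hlt
        have hkc : k ≤ c := by omega
        exact hPk (le_trans (add_le_add (hmono 0 hkc) (hmono 1 hkc)) ha)
    have hcase0 : min (g 0 k) (1 - g 1 k) ≤ t := by
      rcases hdich with hkc | hck
      · exact le_trans (min_le_left _ _) (le_trans (hmono 0 hkc) hta0)
      · have h1 := hmono 1 hck
        refine le_trans (min_le_right _ _) (by linarith)
    have hcase1 : min (1 - g 0 k) (g 1 k) ≤ t := by
      rcases hdich with hkc | hck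
      · exact le_trans (min_le_right _ _) (le_trans (hmono 1 hkc) hta1)
      · have h1 := hmono 0 hck
        refine le_trans (min_le_left _ _) (by linarith)
    rcases hor with ⟨h0, h1⟩ | ⟨h0, h1⟩
    · have : egalW 2 m v X = min (g 0 k) (1 - g 1 k) := by
        rw [egalW, iInf_fin2, h0, h1, hsuf 1 k]
      rw [this]
      exact hcase0
    · have : egalW 2 m v X = min (1 - g 0 k) (g 1 k) := by
        rw [egalW, iInf_fin2, h0, h1, hsuf 0 k]
      rw [this]
      exact hcase1
  have hbdd := optE_bddAbove v hpos hnorm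
  have h2cast : (1 : ℝ) / ((2 : ℕ) : ℝ) = 1 / 2 := by norm_num
  -- which of the four values achieves the max t
  have hchoice : t = g 0 c ∨ t = g 1 c ∨ t = 1 - g 0 (c+1) ∨ t = 1 - g 1 (c+1) := by
    rw [ht]
    rcases max_choice (max (g 0 c) (g 1 c)) (max (1 - g 0 (c+1)) (1 - g 1 (c+1))) with h | h <;>
      rw [h]
    · rcases max_choice (g 0 c) (g 1 c) with h' | h' <;> rw [h']
      · exact Or.inl rfl
      · exact Or.inr (Or.inl rfl)
    · rcases max_choice (1 - g 0 (c+1)) (1 - g 1 (c+1)) with h' | h' <;> rw [h']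
      · exact Or.inr (Or.inr (Or.inl rfl))
      · exact Or.inr (Or.inr (Or.inr rfl))
  rcases hchoice with hteq | hteq | hteq | hteq
  -- Case 1 : t = g 0 c, allocation (prefix c, suffix c)
  · refine ⟨![preB m c, sufB m c], connAlloc_pair, ?_, ?_, ?_⟩
    · -- egalW = optE
      have hE : egalW 2 m v ![preB m c, sufB m c] = g 0 c := by
        rw [egalW_pair, hsuf 1 c]
        exact min_eq_left (by linarith)
      refine le_antisymm (le_csSup hbdd ⟨_, connAlloc_pair, rfl⟩) ?_
      rw [hE, ← hteq]
      exact hoptle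
    · -- PROP1
      intro i
      rcases fin2cases i with rfl | rfl
      · simp only [Matrix.cons_val_zero]
        by_cases hhalf : (1:ℝ)/2 ≤ g 0 c
        · left
          rw [h2cast]
          exact hhalf
        · right
          push_neg at hhalf
          refine ⟨⟨c, hcmlt⟩, by simp [mem_preB], ?_, ?_⟩
          · rw [insert_preB hcmlt]
            exact conn_preB
          · rw [insert_preB hcmlt, h2cast]
            have : 1 - g 0 (c+1) ≤ g 0 c := by rw [← hteq]; exact htb0
            show (1:ℝ)/2 ≤ g 0 (c+1)
            linarith
      · left
        simp only [Matrix.cons_val_one, Matrix.head_cons, Matrix.cons_val_zero]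
        rw [hsuf 1 c, h2cast]
        have h1le : g 1 c ≤ g 0 c := by rw [← hteq]; exact hta1
        linarith
    · -- utilW ≥ 1
      rw [utilW_pair, hsuf 1 c]
      have h1le : g 1 c ≤ g 0 c := by rw [← hteq]; exact hta1
      show (1:ℝ) ≤ g 0 c + (1 - g 1 c)
      linarith
  -- Case 2 : t = g 1 c, allocation (suffix c, prefix c)
  · refine ⟨![sufB m c, preB m c], connAlloc_pair', ?_, ?_, ?_⟩
    · have hE : egalW 2 m v ![sufB m c, preB m c] = g 1 c := by
        rw [egalW_pair, hsuf 0 c]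
        exact min_eq_right (by linarith)
      refine le_antisymm (le_csSup hbdd ⟨_, connAlloc_pair', rfl⟩) ?_
      rw [hE, ← hteq]
      exact hoptle
    · intro i
      rcases fin2cases i with rfl | rfl
      · left
        simp only [Matrix.cons_val_zero]
        rw [hsuf 0 c, h2cast]
        have h0le : g 0 c ≤ g 1 c := by rw [← hteq]; exact hta0
        linarith
      · simp only [Matrix.cons_val_one, Matrix.head_cons, Matrix.cons_val_zero]
        by_cases hhalf : (1:ℝ)/2 ≤ g 1 c
        · left
          rw [h2cast]
          exact hhalf
        · right
          push_neg at hhalf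
          refine ⟨⟨c, hcmlt⟩, by simp [mem_preB], ?_, ?_⟩
          · rw [insert_preB hcmlt]
            exact conn_preB
          · rw [insert_preB hcmlt, h2cast]
            have : 1 - g 1 (c+1) ≤ g 1 c := by rw [← hteq]; exact htb1
            show (1:ℝ)/2 ≤ g 1 (c+1)
            linarith
    · rw [utilW_pair, hsuf 0 c]
      have h0le : g 0 c ≤ g 1 c := by rw [← hteq]; exact hta0
      show (1:ℝ) ≤ (1 - g 0 c) + g 1 c
      linarith
  -- Case 3 : t = 1 - g 0 (c+1), allocation (suffix c+1, prefix c+1)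
  · refine ⟨![sufB m (c+1), preB m (c+1)], connAlloc_pair', ?_, ?_, ?_⟩
    · have hE : egalW 2 m v ![sufB m (c+1), preB m (c+1)] = 1 - g 0 (c+1) := by
        rw [egalW_pair, hsuf 0 (c+1)]
        exact min_eq_left (by linarith)
      refine le_antisymm (le_csSup hbdd ⟨_, connAlloc_pair', rfl⟩) ?_
      rw [hE, ← hteq]
      exact hoptle
    · have hble : 1 - g 1 (c+1) ≤ 1 - g 0 (c+1) := by rw [← hteq]; exact htb1
      intro i
      rcases fin2cases i with rfl | rfl
      · simp only [Matrix.cons_val_zero]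
        by_cases hhalf : (1:ℝ)/2 ≤ 1 - g 0 (c+1)
        · left
          rw [hsuf 0 (c+1), h2cast]
          exact hhalf
        · right
          push_neg at hhalf
          refine ⟨⟨c, hcmlt⟩, by simp [mem_sufB], ?_, ?_⟩
          · rw [insert_sufB hcmlt]
            exact conn_sufB
          · rw [insert_sufB hcmlt, hsuf 0 c, h2cast]
            have : g 0 c ≤ 1 - g 0 (c+1) := by rw [← hteq]; exact hta0
            linarith
      · left
        simp only [Matrix.cons_val_one, Matrix.head_cons]
        rw [h2cast]
        show (1:ℝ)/2 ≤ g 1 (c+1)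
        linarith
    · rw [utilW_pair, hsuf 0 (c+1)]
      have hble : 1 - g 1 (c+1) ≤ 1 - g 0 (c+1) := by rw [← hteq]; exact htb1
      show (1:ℝ) ≤ (1 - g 0 (c+1)) + g 1 (c+1)
      linarith
  -- Case 4 : t = 1 - g 1 (c+1), allocation (prefix c+1, suffix c+1)
  · refine ⟨![preB m (c+1), sufB m (c+1)], connAlloc_pair, ?_, ?_, ?_⟩
    · have hE : egalW 2 m v ![preB m (c+1), sufB m (c+1)] = 1 - g 1 (c+1) := by
        rw [egalW_pair, hsuf 1 (c+1)]
        exact min_eq_right (by linarith)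
      refine le_antisymm (le_csSup hbdd ⟨_, connAlloc_pair, rfl⟩) ?_
      rw [hE, ← hteq]
      exact hoptle
    · have hble : 1 - g 0 (c+1) ≤ 1 - g 1 (c+1) := by rw [← hteq]; exact htb0
      intro i
      rcases fin2cases i with rfl | rfl
      · left
        simp only [Matrix.cons_val_zero]
        rw [h2cast]
        show (1:ℝ)/2 ≤ g 0 (c+1)
        linarith
      · simp only [Matrix.cons_val_one, Matrix.head_cons, Matrix.cons_val_zero]
        by_cases hhalf : (1:ℝ)/2 ≤ 1 - g 1 (c+1)
        · left
          rw [hsuf 1 (c+1), h2cast]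
          exact hhalf
        · right
          push_neg at hhalf
          refine ⟨⟨c, hcmlt⟩, by simp [mem_sufB], ?_, ?_⟩
          · rw [insert_sufB hcmlt]
            exact conn_sufB
          · rw [insert_sufB hcmlt, hsuf 1 c, h2cast]
            have : g 1 c ≤ 1 - g 1 (c+1) := by rw [← hteq]; exact hta1
            linarith
    · rw [utilW_pair, hsuf 1 (c+1)]
      have hble : 1 - g 0 (c+1) ≤ 1 - g 1 (c+1) := by rw [← hteq]; exact htb0
      show (1:ℝ) ≤ g 0 (c+1) + (1 - g 1 (c+1))
      linarith


lemma connAlloc_swap {m : ℕ} (X : Fin 2 → Finset (Fin m)) (hX : ConnAlloc 2 m X) :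
    ConnAlloc 2 m ![X 1, X 0] := by
  obtain ⟨hconn, hdisj, hcov⟩ := hX
  refine ⟨?_, ?_, ?_⟩
  · intro i; rcases fin2cases i with rfl | rfl
    · simpa using hconn 1
    · simpa using hconn 0
  · intro i j hij
    rcases fin2cases i with rfl | rfl <;> rcases fin2cases j with rfl | rfl <;>
      simp at hij ⊢
    · exact (hdisj 1 0 (by decide))
    · exact (hdisj 0 1 (by decide))
  · intro e
    obtain ⟨i, hi⟩ := hcov e
    rcases fin2cases i with rfl | rfl
    · exact ⟨1, by simpa using hi⟩
    · exact ⟨0, by simpa using hi⟩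

lemma val_partition {m : ℕ} (X : Fin 2 → Finset (Fin m)) (hX : ConnAlloc 2 m X)
    (w : Fin m → ℝ) : bundleVal w (X 0) + bundleVal w (X 1) = bundleVal w univ := by
  obtain ⟨k, _, hor⟩ := classify X hX
  rcases hor with ⟨h0, h1⟩ | ⟨h0, h1⟩
  · rw [h0, h1]; exact bundleVal_pre_add_suf w
  · rw [h0, h1, add_comm]; exact bundleVal_pre_add_suf w


/-- For every fair-goods instance with two agents, there exists a
connected allocation that is simultaneously MMS and PROP1, maximizes the egalitarian
welfare, and has utilitarian welfare at least `1` and at least `(2/3) · OPT_U`. -/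
theorem goods_two_agents (m : ℕ) (v : Fin 2 → Fin m → ℝ)
    (hpos : ∀ i j, 0 ≤ v i j)
    (hnorm : ∀ i, bundleVal (v i) Finset.univ = 1) :
    ∃ A : Fin 2 → Finset (Fin m), ConnAlloc 2 m A ∧
      (∀ i, mmsVal 2 m (v i) ≤ bundleVal (v i) (A i)) ∧
      Prop1Goods 2 m v A ∧
      egalW 2 m v A = optE 2 m v ∧
      (1 : ℝ) ≤ utilW 2 m v A ∧
      (2 / 3 : ℝ) * optU 2 m v ≤ utilW 2 m v A := by
  obtain ⟨A, hconn, hEopt, hprop, hUW⟩ := exists_good m v hpos hnorm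
  have hbdd := optE_bddAbove v hpos hnorm
  have hutil : utilW 2 m v A = bundleVal (v 0) (A 0) + bundleVal (v 1) (A 1) := by
    rw [utilW, Fin.sum_univ_two]
  have hEhalf : optE 2 m v ≤ utilW 2 m v A / 2 := by
    have h0 := egalW_le v A 0
    have h1 := egalW_le v A 1
    rw [hEopt] at h0 h1
    linarith
  refine ⟨A, hconn, ?_, hprop, hEopt, hUW, ?_⟩
  · -- MMS property
    intro i
    apply csSup_le
    · exact ⟨_, ![preB m 0, sufB m 0], connAlloc_pair, rfl⟩
    · rintro x ⟨X, hX, rfl⟩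
      have hxmin : (⨅ j, bundleVal (v i) (X j)) =
          min (bundleVal (v i) (X 0)) (bundleVal (v i) (X 1)) := iInf_fin2 _
      have hparti := val_partition X hX (v i)
      rw [hnorm i] at hparti
      -- it suffices to bound by optE
      have hAi : optE 2 m v ≤ bundleVal (v i) (A i) := by
        rw [← hEopt]; exact egalW_le v A i
      refine le_trans ?_ hAi
      rw [hxmin]
      set p := bundleVal (v i) (X 0) with hp
      set q := bundleVal (v i) (X 1) with hq
      have hminhalf : min p q ≤ 1 / 2 := by
        rcases le_total p q with h | h
        · rw [min_eq_left h]; linarith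
        · rw [min_eq_right h]; linarith
      rcases fin2cases i with rfl | rfl
      · have hpart1 := val_partition X hX (v 1)
        rw [hnorm 1] at hpart1
        rcases le_total (bundleVal (v 1) (X 0)) (bundleVal (v 1) (X 1)) with h | h
        · -- agent 1 takes X 1, agent 0 takes X 0 : this is X itself
          have hE : egalW 2 m v X = min (bundleVal (v 0) (X 0)) (bundleVal (v 1) (X 1)) := by
            rw [egalW, iInf_fin2]
          have hle : egalW 2 m v X ≤ optE 2 m v := le_csSup hbdd ⟨X, hX, rfl⟩
          refine le_trans ?_ (le_trans (le_of_eq hE.symm) hle)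
          refine le_min (le_trans (min_le_left _ _) (le_refl _)) ?_
          linarith [min_le_left p q, min_le_right p q]
        · have hY := connAlloc_swap X hX
          have hE : egalW 2 m v ![X 1, X 0] =
              min (bundleVal (v 0) (X 1)) (bundleVal (v 1) (X 0)) := egalW_pair v _ _
          have hle : egalW 2 m v ![X 1, X 0] ≤ optE 2 m v := le_csSup hbdd ⟨_, hY, rfl⟩
          refine le_trans ?_ (le_trans (le_of_eq hE.symm) hle)
          refine le_min (min_le_right _ _) ?_
          linarith [min_le_left p q, min_le_right p q]
      · have hpart0 := val_partition X hX (v 0)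
        rw [hnorm 0] at hpart0
        rcases le_total (bundleVal (v 0) (X 1)) (bundleVal (v 0) (X 0)) with h | h
        · have hE : egalW 2 m v X = min (bundleVal (v 0) (X 0)) (bundleVal (v 1) (X 1)) := by
            rw [egalW, iInf_fin2]
          have hle : egalW 2 m v X ≤ optE 2 m v := le_csSup hbdd ⟨X, hX, rfl⟩
          refine le_trans ?_ (le_trans (le_of_eq hE.symm) hle)
          refine le_min ?_ (min_le_right _ _)
          linarith [min_le_left p q, min_le_right p q]
        · have hY := connAlloc_swap X hX
          have hE : egalW 2 m v ![X 1, X 0] =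
              min (bundleVal (v 0) (X 1)) (bundleVal (v 1) (X 0)) := egalW_pair v _ _
          have hle : egalW 2 m v ![X 1, X 0] ≤ optE 2 m v := le_csSup hbdd ⟨_, hY, rfl⟩
          refine le_trans ?_ (le_trans (le_of_eq hE.symm) hle)
          refine le_min ?_ (min_le_left _ _)
          linarith [min_le_left p q, min_le_right p q]
  · -- 2/3 of optimal utilitarian welfare
    have hkey : optU 2 m v ≤ (3 / 2 : ℝ) * utilW 2 m v A := by
      apply csSup_le
      · exact ⟨_, ![preB m 0, sufB m 0], connAlloc_pair, rfl⟩
      · rintro x ⟨B, hB, rfl⟩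
        have hutilB : utilW 2 m v B = bundleVal (v 0) (B 0) + bundleVal (v 1) (B 1) := by
          rw [utilW, Fin.sum_univ_two]
        have hEB : egalW 2 m v B =
            min (bundleVal (v 0) (B 0)) (bundleVal (v 1) (B 1)) := by
          rw [egalW, iInf_fin2]
        have hle : egalW 2 m v B ≤ optE 2 m v := le_csSup hbdd ⟨B, hB, rfl⟩
        have hb0 : bundleVal (v 0) (B 0) ≤ 1 := by
          rw [← hnorm 0]; exact bundleVal_le_total _ (hpos 0) _
        have hb1 : bundleVal (v 1) (B 1) ≤ 1 := by
          rw [← hnorm 1]; exact bundleVal_le_total _ (hpos 1) _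
        have hmin : min (bundleVal (v 0) (B 0)) (bundleVal (v 1) (B 1)) ≤
            utilW 2 m v A / 2 := by
          rw [← hEB]; exact le_trans hle hEhalf
        rcases le_total (bundleVal (v 0) (B 0)) (bundleVal (v 1) (B 1)) with h | h
        · rw [min_eq_left h] at hmin
          rw [hutilB]
          linarith
        · rw [min_eq_right h] at hmin
          rw [hutilB]
          linarith
    linarith
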